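/- Let Q1, Q2 be real symmetric k×k matrices satisfying Condition 4 over ℝ: for every (ν1,ν2) ∈ ℝ² \ {(0,0)}, the matrix ν1Q1 + ν2Q2 has rank at least k−1. Then there exist constants c > 0 and C > 0, depending only on Q1 and Q2, with the following property: for every (ν1,ν2) ∈ ℝ² \ {(0,0)}, writing ν* = max(|ν1|,|ν2|) and letting ρ_1, …, ρ_k be the eigenvalues of ν1Q1 + ν2Q2 ordered so that |ρ_1| ≤ |ρ_2| ≤ … ≤ |ρ_k|, one has |ρ_2| ≥ c·ν* and |ρ_k| ≤ C·ν*. -/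

import Mathlib

open scoped BigOperators
open MeasureTheory Filter

noncomputable section

namespace Paper

/-- `e(t) = exp(2πit)`. -/
def e (t : ℝ) : ℂ := Complex.exp (2 * Real.pi * Complex.I * t)

/-- Value of the quadratic form with matrix `A` at `x`, i.e. `xᵀ A x`. -/
def Qf {k : ℕ} {R : Type*} [CommRing R] (A : Matrix (Fin k) (Fin k) R) (x : Fin k → R) : R :=
  dotProduct x (A.mulVec x)

/-- Value over `R` of the integral quadratic form with integer matrix `A`. -/
def Q {k : ℕ} (R : Type*) [CommRing R] (A : Matrix (Fin k) (Fin k) ℤ) (x : Fin k → R) : R :=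
  Qf (A.map (Int.cast : ℤ → R)) x

/-- The Jacobian matrix of a pair of quadratic forms at `x`, with rows `∇Q₁(x) = 2A₁x`,
`∇Q₂(x) = 2A₂x`. -/
def Jac {k : ℕ} {R : Type*} [CommRing R] (A₁ A₂ : Matrix (Fin k) (Fin k) R)
    (x : Fin k → R) : Matrix (Fin 2) (Fin k) R :=
  Matrix.of ![(2 : R) • A₁.mulVec x, (2 : R) • A₂.mulVec x]

/-- Condition 1: the projective variety `Q₁ = Q₂ = 0` is nonsingular over `ℚ̄`. -/
def Cond1 {k : ℕ} (A₁ A₂ : Matrix (Fin k) (Fin k) ℤ) : Prop :=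
  ∀ x : Fin k → AlgebraicClosure ℚ, x ≠ 0 →
    Q (AlgebraicClosure ℚ) A₁ x = 0 → Q (AlgebraicClosure ℚ) A₂ x = 0 →
    (Jac (A₁.map (Int.cast : ℤ → AlgebraicClosure ℚ)) (A₂.map Int.cast) x).rank = 2

/-- The determinant form `F(x,y) = det(x A₁ + y A₂)` over `ℤ`. -/
def Fform {k : ℕ} (A₁ A₂ : Matrix (Fin k) (Fin k) ℤ) (x y : ℤ) : ℤ :=
  (x • A₁ + y • A₂).det

/-- The determinant form `F(x,y) = det(x A₁ + y A₂)` over `ℝ`. -/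
def FformR {k : ℕ} (A₁ A₂ : Matrix (Fin k) (Fin k) ℤ) (x y : ℝ) : ℝ :=
  (x • A₁.map (Int.cast : ℤ → ℝ) + y • A₂.map (Int.cast : ℤ → ℝ)).det

/-- The weighted representation function `R_B(n₁,n₂)`. -/
def RB {k : ℕ} (A₁ A₂ : Matrix (Fin k) (Fin k) ℤ) (w : (Fin k → ℝ) → ℝ) (B : ℝ)
    (n₁ n₂ : ℤ) : ℝ :=
  ∑' x : Fin k → ℤ, if Q ℤ A₁ x = n₁ ∧ Q ℤ A₂ x = n₂ then w (fun i => (x i : ℝ) / B) else 0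

/-- `e_q(t) = e(t/q)`. -/
def eq' (q : ℕ) (t : ℤ) : ℂ := e ((t : ℝ) / q)

/-- The complete exponential sum `S_q(a₁,a₂)`. -/
def Sq {k : ℕ} (A₁ A₂ : Matrix (Fin k) (Fin k) ℤ) (q : ℕ) (a₁ a₂ : ℤ) : ℂ :=
  ∑ x : Fin k → Fin q,
    eq' q (a₁ * Q ℤ A₁ (fun i => ((x i : ℕ) : ℤ)) + a₂ * Q ℤ A₂ (fun i => ((x i : ℕ) : ℤ)))

/-- `T(n;q) = Σ_{1 ≤ a₁,a₂ ≤ q, (a₁,a₂,q)=1} S_q(a₁,a₂) e_q(-a₁n₁-a₂n₂)`. -/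
def T {k : ℕ} (A₁ A₂ : Matrix (Fin k) (Fin k) ℤ) (n₁ n₂ : ℤ) (q : ℕ) : ℂ :=
  ∑ a₁ ∈ Finset.Icc 1 q, ∑ a₂ ∈ Finset.Icc 1 q,
    if Nat.gcd (Nat.gcd a₁ a₂) q = 1 then
      Sq A₁ A₂ q (a₁ : ℤ) (a₂ : ℤ) * eq' q (-((a₁ : ℤ) * n₁ + (a₂ : ℤ) * n₂))
    else 0

/-- The singular series `𝔖(n₁,n₂) = Σ_{q ≥ 1} q^{-k} T(n;q)`. -/
def SingSeries {k : ℕ} (A₁ A₂ : Matrix (Fin k) (Fin k) ℤ) (n₁ n₂ : ℤ) : ℂ :=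
  ∑' q : ℕ, ((q : ℂ) ^ k)⁻¹ * T A₁ A₂ n₁ n₂ q

/-- The truncated singular integral `𝒥_w(μ;R)`. -/
def Jtrunc {k : ℕ} (A₁ A₂ : Matrix (Fin k) (Fin k) ℤ) (w : (Fin k → ℝ) → ℝ)
    (μ₁ μ₂ : ℝ) (R : ℝ) : ℂ :=
  ∫ θ₁ in (-R)..R, ∫ θ₂ in (-R)..R, ∫ x : Fin k → ℝ,
    e (θ₁ * (Q ℝ A₁ x - μ₁) + θ₂ * (Q ℝ A₂ x - μ₂)) * (w x : ℂ)

/-- The singular integral `𝒥_w(μ) = lim_{R → ∞} 𝒥_w(μ;R)`. -/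
def SingInt {k : ℕ} (A₁ A₂ : Matrix (Fin k) (Fin k) ℤ) (w : (Fin k → ℝ) → ℝ)
    (μ₁ μ₂ : ℝ) : ℂ :=
  limUnder atTop (Jtrunc A₁ A₂ w μ₁ μ₂)


section EigenAux

open Polynomial Matrix Finset

variable {k : ℕ}

/-- charpoly is invariant under unitary conjugation. -/
lemma aux_charpoly_conj (U D : Matrix (Fin k) (Fin k) ℝ)
    (h1 : U * star U = 1) (h2 : star U * U = 1) :
    (U * D * star U).charpoly = D.charpoly := by
  unfold Matrix.charpoly
  have hmap : charmatrix (U * D * star U)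
      = (U.map C) * charmatrix D * ((star U).map C) := by
    unfold charmatrix
    rw [Matrix.mul_sub, Matrix.sub_mul]
    congr 1
    · rw [Matrix.scalar_apply, ← Matrix.smul_one_eq_diagonal, Matrix.mul_smul, Matrix.smul_mul, Matrix.mul_one,
        ← Matrix.map_mul, h1, Matrix.map_one _ (map_zero C) (map_one C)]
    · rw [RingHom.mapMatrix_apply, RingHom.mapMatrix_apply, ← Matrix.map_mul, ← Matrix.map_mul]
  rw [hmap, Matrix.det_mul, Matrix.det_mul, mul_comm, ← mul_assoc, ← Matrix.det_mul,
    ← Matrix.map_mul, h2, Matrix.map_one _ (map_zero C) (map_one C), Matrix.det_one, one_mul]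

lemma aux_charpoly_diagonal (v : Fin k → ℝ) :
    (Matrix.diagonal v).charpoly = ∏ i, (X - C (v i)) := by
  unfold Matrix.charpoly
  have : charmatrix (Matrix.diagonal v) = Matrix.diagonal fun i => X - C (v i) := by
    ext i j
    by_cases h : i = j
    · subst h; simp [charmatrix_apply_eq]
    · simp [charmatrix_apply_ne _ _ _ h, Matrix.diagonal_apply_ne _ h]
  rw [this, Matrix.det_diagonal]

lemma aux_isHermitian {M : Matrix (Fin k) (Fin k) ℝ} (h : M.IsSymm) : M.IsHermitian := by
  ext i j
  simpa [Matrix.conjTranspose_apply] using congrFun (congrFun h i) j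

lemma aux_unitary_facts {M : Matrix (Fin k) (Fin k) ℝ} (hM : M.IsHermitian) :
    (hM.eigenvectorUnitary : Matrix (Fin k) (Fin k) ℝ) * star (hM.eigenvectorUnitary : Matrix (Fin k) (Fin k) ℝ) = 1 ∧
    star (hM.eigenvectorUnitary : Matrix (Fin k) (Fin k) ℝ) * (hM.eigenvectorUnitary : Matrix (Fin k) (Fin k) ℝ) = 1 :=
  ⟨Unitary.mul_star_self_of_mem (hM.eigenvectorUnitary).2,
   Unitary.star_mul_self_of_mem (hM.eigenvectorUnitary).2⟩

lemma aux_diag_real {M : Matrix (Fin k) (Fin k) ℝ} (hM : M.IsHermitian) :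
    Matrix.diagonal ((RCLike.ofReal : ℝ → ℝ) ∘ hM.eigenvalues) = Matrix.diagonal hM.eigenvalues := by
  congr 1

lemma aux_charpoly_hermitian {M : Matrix (Fin k) (Fin k) ℝ} (hM : M.IsHermitian) :
    M.charpoly = ∏ i, (X - C (hM.eigenvalues i)) := by
  obtain ⟨h1, h2⟩ := aux_unitary_facts hM
  conv_lhs => rw [hM.spectral_theorem]
  rw [aux_diag_real hM, Unitary.conjStarAlgAut_apply, aux_charpoly_conj _ _ h1 h2, aux_charpoly_diagonal]


lemma aux_MM {M : Matrix (Fin k) (Fin k) ℝ} (hM : M.IsHermitian) :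
    M * M = (hM.eigenvectorUnitary : Matrix (Fin k) (Fin k) ℝ) *
      ((Matrix.diagonal fun i => hM.eigenvalues i ^ 2) *
        star (hM.eigenvectorUnitary : Matrix (Fin k) (Fin k) ℝ)) := by
  obtain ⟨h1, h2⟩ := aux_unitary_facts hM
  set U : Matrix (Fin k) (Fin k) ℝ := (hM.eigenvectorUnitary : Matrix (Fin k) (Fin k) ℝ)
  have hMU : M = U * Matrix.diagonal hM.eigenvalues * star U := by
    conv_lhs => rw [hM.spectral_theorem]
    rw [aux_diag_real hM, Unitary.conjStarAlgAut_apply]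
  have step1 : M * M = U * Matrix.diagonal hM.eigenvalues * (star U * U) *
      Matrix.diagonal hM.eigenvalues * star U := by
    conv_lhs => rw [hMU]
    noncomm_ring
  rw [step1, h2, mul_one, mul_assoc U (Matrix.diagonal hM.eigenvalues) (Matrix.diagonal hM.eigenvalues),
    Matrix.diagonal_mul_diagonal, mul_assoc]
  simp [sq]

/-- trace of M*M in terms of eigenvalues. -/
lemma aux_trace_sq {M : Matrix (Fin k) (Fin k) ℝ} (hM : M.IsHermitian) :
    (M * M).trace = ∑ i, hM.eigenvalues i ^ 2 := by
  obtain ⟨h1, h2⟩ := aux_unitary_facts hM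
  rw [aux_MM hM, Matrix.trace_mul_comm, mul_assoc, h2, mul_one,
    Matrix.trace_diagonal]

lemma aux_trace_adj_sq {M : Matrix (Fin k) (Fin k) ℝ} (hM : M.IsHermitian) :
    (Matrix.adjugate (M * M)).trace
      = ∑ i, ∏ j ∈ Finset.univ.erase i, hM.eigenvalues j ^ 2 := by
  obtain ⟨h1, h2⟩ := aux_unitary_facts hM
  rw [aux_MM hM, Matrix.adjugate_mul_distrib, Matrix.adjugate_mul_distrib, Matrix.trace_mul_comm,
    ← mul_assoc, ← Matrix.adjugate_mul_distrib, h2, Matrix.adjugate_one, one_mul,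
    Matrix.adjugate_diagonal, Matrix.trace_diagonal]

/-- Two root tuples of the same polynomial give equal multisets. -/
lemma aux_multiset_eq (ρ lam : Fin k → ℝ)
    (h : (∏ i, (X - C (ρ i))) = ∏ i, (X - C (lam i))) :
    (Finset.univ.val.map ρ) = (Finset.univ.val.map lam) := by
  have h1 : ((Finset.univ.val.map ρ).map fun a => X - C a).prod
      = ((Finset.univ.val.map lam).map fun a => X - C a).prod := by
    simpa [Finset.prod, Multiset.map_map, Function.comp_def] using h
  have := congrArg Polynomial.roots h1
  rwa [Polynomial.roots_multiset_prod_X_sub_C, Polynomial.roots_multiset_prod_X_sub_C] at this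

/-- Sum over erased products as a multiset esymm. -/
lemma aux_erase_sum (hk : 1 ≤ k) (h : Fin k → ℝ) :
    ∑ i, ∏ j ∈ Finset.univ.erase i, h j
      = (Finset.univ.val.map h).esymm (k - 1) := by
  classical
  rw [Finset.esymm_map_val]
  have i0 : Fin k := ⟨0, hk⟩
  refine Finset.sum_nbij' (fun a => Finset.univ.erase a)
    (fun t => if ht : (Finset.univ \ t).Nonempty then (Finset.univ \ t).min' ht else i0)
    ?_ ?_ ?_ ?_ ?_
  · intro a _
    rw [Finset.mem_powersetCard]
    exact ⟨Finset.subset_univ _, by simp [Finset.card_erase_of_mem]⟩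
  · intro t ht
    exact Finset.mem_univ _
  · intro a _
    have hsd : Finset.univ \ Finset.univ.erase a = {a} := by
      ext j
      simp [Finset.mem_sdiff, Finset.mem_erase]
    simp [hsd]
  · intro t ht
    rw [Finset.mem_powersetCard] at ht
    have hcard : (Finset.univ \ t).card = 1 := by
      rw [Finset.card_sdiff_of_subset ht.1, ht.2, Finset.card_univ, Fintype.card_fin]
      omega
    obtain ⟨b, hb⟩ := Finset.card_eq_one.mp hcard
    have hne : ({b} : Finset (Fin k)).Nonempty := Finset.singleton_nonempty b
    simp only [hb]
    rw [dif_pos hne, Finset.min'_singleton]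
    have hbt : b ∉ t := by
      have : b ∈ Finset.univ \ t := hb ▸ Finset.mem_singleton_self b
      exact (Finset.mem_sdiff.mp this).2
    refine (Finset.eq_of_subset_of_card_le ?_ ?_).symm
    · intro x hx
      rw [Finset.mem_erase]
      exact ⟨fun hxb => hbt (hxb ▸ hx), Finset.mem_univ x⟩
    · rw [Finset.card_erase_of_mem (Finset.mem_univ b), ht.2, Finset.card_univ, Fintype.card_fin]
  · intro a _
    rfl

/-- At most one zero eigenvalue from the rank condition. -/
lemma aux_one_zero (hk : 1 ≤ k) (lam : Fin k → ℝ)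
    (hr : k - 1 ≤ Fintype.card {i // lam i ≠ 0}) :
    ∃ i₀ : Fin k, ∀ j, lam j = 0 → j = i₀ := by
  classical
  have hcard : Fintype.card {i // lam i ≠ 0} = (Finset.univ.filter fun i => lam i ≠ 0).card :=
    Fintype.card_subtype _
  have hsplit : (Finset.univ.filter fun i => lam i ≠ 0).card
      + (Finset.univ.filter fun i => ¬ lam i ≠ 0).card = k := by
    rw [Finset.card_filter_add_card_filter_not]
    simp
  by_cases hne : (Finset.univ.filter fun i => lam i = 0).Nonempty
  · obtain ⟨i₀, hi₀⟩ := hne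
    refine ⟨i₀, fun j hj => ?_⟩
    have hle : (Finset.univ.filter fun i => ¬ lam i ≠ 0).card ≤ 1 := by omega
    have h1 : (Finset.univ.filter fun i => ¬ lam i ≠ 0) = Finset.univ.filter fun i => lam i = 0 := by
      simp [not_not]
    rw [h1] at hle
    exact Finset.card_le_one.mp hle j (by simp [hj]) i₀ hi₀
  · refine ⟨⟨0, hk⟩, fun j hj => absurd ⟨j, by simp [hj]⟩ hne⟩

lemma aux_sum_sq_invariant (ρ lam : Fin k → ℝ)
    (meq : (Finset.univ.val.map ρ) = (Finset.univ.val.map lam)) :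
    ∑ i, ρ i ^ 2 = ∑ i, lam i ^ 2 := by
  have h1 : ∑ i, ρ i ^ 2 = ((Finset.univ.val.map ρ).map fun x => x ^ 2).sum := by
    rw [Multiset.map_map]; rfl
  have h2 : ∑ i, lam i ^ 2 = ((Finset.univ.val.map lam).map fun x => x ^ 2).sum := by
    rw [Multiset.map_map]; rfl
  rw [h1, h2, meq]

lemma aux_esymm_invariant (hk : 1 ≤ k) (ρ lam : Fin k → ℝ)
    (meq : (Finset.univ.val.map ρ) = (Finset.univ.val.map lam)) :
    ∑ i, ∏ j ∈ Finset.univ.erase i, ρ j ^ 2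
      = ∑ i, ∏ j ∈ Finset.univ.erase i, lam j ^ 2 := by
  have h1 : ∑ i, ∏ j ∈ Finset.univ.erase i, ρ j ^ 2
      = ((Finset.univ.val.map ρ).map fun x => x ^ 2).esymm (k - 1) := by
    rw [aux_erase_sum hk (fun j => ρ j ^ 2), Multiset.map_map]; rfl
  have h2 : ∑ i, ∏ j ∈ Finset.univ.erase i, lam j ^ 2
      = ((Finset.univ.val.map lam).map fun x => x ^ 2).esymm (k - 1) := by
    rw [aux_erase_sum hk (fun j => lam j ^ 2), Multiset.map_map]; rfl
  rw [h1, h2, meq]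

/-- Matrix invariants in terms of any charpoly root tuple. -/
lemma aux_rho_facts (hk : 1 ≤ k) {M : Matrix (Fin k) (Fin k) ℝ} (hM : M.IsHermitian)
    (ρ : Fin k → ℝ) (hch : M.charpoly = ∏ i, (X - C (ρ i))) :
    (M * M).trace = ∑ i, ρ i ^ 2 ∧
      (Matrix.adjugate (M * M)).trace = ∑ i, ∏ j ∈ Finset.univ.erase i, ρ j ^ 2 := by
  have heq : (∏ i, (X - C (ρ i))) = ∏ i, (X - C (hM.eigenvalues i)) := by
    rw [← hch, aux_charpoly_hermitian hM]
  have meq := aux_multiset_eq ρ hM.eigenvalues heq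
  exact ⟨by rw [aux_trace_sq hM, aux_sum_sq_invariant ρ hM.eigenvalues meq],
    by rw [aux_trace_adj_sq hM, aux_esymm_invariant hk ρ hM.eigenvalues meq]⟩

end EigenAux

open Polynomial in
/-- **Lemma 2.5**: under Condition 4 over `ℝ`, for any nontrivial pair `(ν₁,ν₂)` at most one
eigenvalue of `ν₁Q₁ + ν₂Q₂` is small: ordering the eigenvalues by absolute value,
`|ρ₂| ≫ ν*` and `|ρ_k| ≪ ν*` where `ν* = max(|ν₁|,|ν₂|)`. -/
theorem eigenvalue_bounds (k : ℕ) (hk : 2 ≤ k)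
    (Q₁ Q₂ : Matrix (Fin k) (Fin k) ℝ) (hQ₁ : Q₁.IsSymm) (hQ₂ : Q₂.IsSymm)
    (hcond4 : ∀ ν₁ ν₂ : ℝ, ¬(ν₁ = 0 ∧ ν₂ = 0) → k - 1 ≤ (ν₁ • Q₁ + ν₂ • Q₂).rank) :
    ∃ c C : ℝ, 0 < c ∧ 0 < C ∧ ∀ ν₁ ν₂ : ℝ, ¬(ν₁ = 0 ∧ ν₂ = 0) →
      ∀ ρ : Fin k → ℝ,
        (ν₁ • Q₁ + ν₂ • Q₂).charpoly = ∏ i, (X - Polynomial.C (ρ i)) →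
        (∀ i j : Fin k, i ≤ j → |ρ i| ≤ |ρ j|) →
        c * max |ν₁| |ν₂| ≤ |ρ ⟨1, by omega⟩| ∧ |ρ ⟨k - 1, by omega⟩| ≤ C * max |ν₁| |ν₂| := by
  classical
  have hk1 : 1 ≤ k := by omega
  set Mp : ℝ × ℝ → Matrix (Fin k) (Fin k) ℝ := fun p => p.1 • Q₁ + p.2 • Q₂ with hMp
  have hsymmAll : ∀ p : ℝ × ℝ, (Mp p).IsHermitian := by
    intro p
    apply aux_isHermitian
    unfold Matrix.IsSymm
    rw [Matrix.transpose_add, Matrix.transpose_smul, Matrix.transpose_smul, hQ₁.eq, hQ₂.eq]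
  have hMpc : Continuous Mp := by
    exact (continuous_fst.smul continuous_const).add (continuous_snd.smul continuous_const)
  set f₁ : ℝ × ℝ → ℝ := fun p => ((Mp p) * (Mp p)).trace with hf₁def
  set f₂ : ℝ × ℝ → ℝ := fun p => (Matrix.adjugate ((Mp p) * (Mp p))).trace with hf₂def
  have hf₁c : Continuous f₁ := (hMpc.matrix_mul hMpc).matrix_trace
  have hf₂c : Continuous f₂ := ((hMpc.matrix_mul hMpc).matrix_adjugate).matrix_trace
  have hnorm : ∀ p : ℝ × ℝ, ‖p‖ = max |p.1| |p.2| := by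
    intro p
    rw [Prod.norm_def, Real.norm_eq_abs, Real.norm_eq_abs]
  set S : Set (ℝ × ℝ) := Metric.sphere (0 : ℝ × ℝ) 1 with hSdef
  have hScompact : IsCompact S := isCompact_sphere 0 1
  have hSne : S.Nonempty := by
    refine ⟨(1, 0), ?_⟩
    rw [mem_sphere_zero_iff_norm, hnorm]
    norm_num
  -- positivity of f₂ on the sphere
  have hf₂pos : ∀ p ∈ S, 0 < f₂ p := by
    intro p hp
    have hp0 : ¬(p.1 = 0 ∧ p.2 = 0) := by
      rintro ⟨h1, h2⟩
      rw [hSdef, mem_sphere_zero_iff_norm, hnorm, h1, h2] at hp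
      norm_num at hp
    have hH := hsymmAll p
    have hrank := hcond4 p.1 p.2 hp0
    have hrank' : k - 1 ≤ Fintype.card {i // hH.eigenvalues i ≠ 0} := by
      rw [← hH.rank_eq_card_non_zero_eigs]
      exact hrank
    obtain ⟨i₀, hi₀⟩ := aux_one_zero hk1 hH.eigenvalues hrank'
    have htr := aux_trace_adj_sq hH
    rw [hf₂def]
    simp only []
    rw [htr]
    have hterm : 0 < ∏ j ∈ Finset.univ.erase i₀, hH.eigenvalues j ^ 2 := by
      apply Finset.prod_pos
      intro j hj
      have hj0 : hH.eigenvalues j ≠ 0 := fun h =>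
        (Finset.mem_erase.mp hj).1 (hi₀ j h)
      positivity
    have hle : ∏ j ∈ Finset.univ.erase i₀, hH.eigenvalues j ^ 2
        ≤ ∑ i, ∏ j ∈ Finset.univ.erase i, hH.eigenvalues j ^ 2 := by
      apply Finset.single_le_sum (f := fun i => ∏ j ∈ Finset.univ.erase i, hH.eigenvalues j ^ 2)
      · intro i _
        exact Finset.prod_nonneg fun j _ => sq_nonneg _
      · exact Finset.mem_univ i₀
    linarith
  obtain ⟨p₁, hp₁S, hp₁max⟩ := hScompact.exists_isMaxOn hSne hf₁c.continuousOn
  obtain ⟨p₂, hp₂S, hp₂min⟩ := hScompact.exists_isMinOn hSne hf₂c.continuousOn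
  set C₀ : ℝ := f₁ p₁ with hC₀def
  set c₀ : ℝ := f₂ p₂ with hc₀def
  have hc₀pos : 0 < c₀ := hf₂pos p₂ hp₂S
  have hC₀nonneg : 0 ≤ C₀ := by
    rw [hC₀def, hf₁def]
    simp only []
    rw [aux_trace_sq (hsymmAll p₁)]
    exact Finset.sum_nonneg fun i _ => sq_nonneg _
  set C : ℝ := Real.sqrt C₀ + 1 with hCdef
  have hCpos : 0 < C := by positivity
  set c : ℝ := Real.sqrt (c₀ / (k * C ^ (2 * (k - 2)))) with hcdef
  have hden : 0 < (k : ℝ) * C ^ (2 * (k - 2)) := by positivity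
  have hcpos : 0 < c := Real.sqrt_pos.mpr (div_pos hc₀pos hden)
  refine ⟨c, C, hcpos, hCpos, ?_⟩
  intro ν₁ ν₂ hν ρ hch hsort
  set t : ℝ := max |ν₁| |ν₂| with htdef
  have ht : 0 < t := by
    rcases not_and_or.mp hν with h | h
    · exact lt_max_of_lt_left (abs_pos.mpr h)
    · exact lt_max_of_lt_right (abs_pos.mpr h)
  set u : ℝ × ℝ := (t⁻¹ * ν₁, t⁻¹ * ν₂) with hudef
  have huS : u ∈ S := by
    rw [hSdef, mem_sphere_zero_iff_norm, hnorm]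
    rw [hudef]
    simp only [abs_mul, abs_inv, abs_of_pos ht]
    rw [← mul_max_of_nonneg _ _ (inv_nonneg.mpr ht.le)]
    rw [← htdef, inv_mul_cancel₀ ht.ne']
  set A : Matrix (Fin k) (Fin k) ℝ := Mp u with hAdef
  have hMscale : ν₁ • Q₁ + ν₂ • Q₂ = t • A := by
    rw [hAdef, hMp, hudef]
    simp only [smul_add, smul_smul]
    rw [mul_inv_cancel_left₀ ht.ne', mul_inv_cancel_left₀ ht.ne']
  have hH : (ν₁ • Q₁ + ν₂ • Q₂).IsHermitian := by
    have := hsymmAll (ν₁, ν₂)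
    simpa [hMp] using this
  obtain ⟨htr, hadj⟩ := aux_rho_facts hk1 hH ρ hch
  -- square trace identity
  have hMM : (ν₁ • Q₁ + ν₂ • Q₂) * (ν₁ • Q₁ + ν₂ • Q₂) = (t * t) • (A * A) := by
    rw [hMscale, smul_mul_assoc, mul_smul_comm, smul_smul]
  have htrace_eq : ∑ i, ρ i ^ 2 = t ^ 2 * f₁ u := by
    rw [← htr, hMM, Matrix.trace_smul, smul_eq_mul, hf₁def]
    ring_nf
    rfl
  have hadj_eq : ∑ i, ∏ j ∈ Finset.univ.erase i, ρ j ^ 2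
      = (t * t) ^ (k - 1) * f₂ u := by
    rw [← hadj, hMM, Matrix.adjugate_smul, Matrix.trace_smul, smul_eq_mul, hf₂def]
    simp [Fintype.card_fin]
    exact Or.inl rfl
  -- Upper bound
  have hupper : ∀ j : Fin k, |ρ j| ≤ C * t := by
    intro j
    have hjle : j ≤ (⟨k - 1, by omega⟩ : Fin k) := by
      rw [Fin.le_def]
      simp only []
      omega
    have h1 : |ρ j| ≤ |ρ ⟨k - 1, by omega⟩| := hsort j _ hjle
    have h2 : (ρ ⟨k - 1, by omega⟩) ^ 2 ≤ ∑ i, ρ i ^ 2 :=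
      Finset.single_le_sum (f := fun i => ρ i ^ 2)
        (fun i _ => sq_nonneg _) (Finset.mem_univ _)
    have h3 : f₁ u ≤ C₀ := hp₁max huS
    have h4 : (ρ ⟨k - 1, by omega⟩) ^ 2 ≤ t ^ 2 * C₀ := by
      rw [htrace_eq] at h2
      nlinarith [sq_nonneg t]
    have h5 : |ρ ⟨k - 1, by omega⟩| ≤ t * Real.sqrt C₀ := by
      rw [← Real.sqrt_sq_eq_abs]
      calc Real.sqrt ((ρ ⟨k - 1, by omega⟩) ^ 2) ≤ Real.sqrt (t ^ 2 * C₀) :=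
            Real.sqrt_le_sqrt h4
        _ = t * Real.sqrt C₀ := by
            rw [Real.sqrt_mul (sq_nonneg t), Real.sqrt_sq ht.le]
    calc |ρ j| ≤ |ρ ⟨k - 1, by omega⟩| := h1
      _ ≤ t * Real.sqrt C₀ := h5
      _ ≤ C * t := by
          rw [hCdef]
          nlinarith [Real.sqrt_nonneg C₀]
  constructor
  · -- Lower bound on |ρ 1|
    set a : ℝ := |ρ ⟨1, by omega⟩| with hadefn
    have haterm : ∀ i : Fin k, ∏ j ∈ Finset.univ.erase i, ρ j ^ 2
        ≤ a ^ 2 * ((C * t) ^ 2) ^ (k - 2) := by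
      intro i
      set j₀ : Fin k := if i = (⟨0, by omega⟩ : Fin k) then ⟨1, by omega⟩ else ⟨0, by omega⟩
        with hj₀def
      have hj₀mem : j₀ ∈ Finset.univ.erase i := by
        rw [Finset.mem_erase]
        refine ⟨?_, Finset.mem_univ _⟩
        rw [hj₀def]
        split
        · rename_i h
          rw [h]
          intro hcontra
          exact absurd (congrArg Fin.val hcontra) (by simp)
        · rename_i h
          intro hcontra
          exact h hcontra.symm
      have hj₀le : j₀ ≤ (⟨1, by omega⟩ : Fin k) := by
        rw [Fin.le_def, hj₀def]
        split <;> simp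
      have hj₀abs : |ρ j₀| ≤ a := hsort j₀ _ hj₀le
      rw [← Finset.mul_prod_erase _ _ hj₀mem]
      have hb1 : ρ j₀ ^ 2 ≤ a ^ 2 := by
        rw [← sq_abs (ρ j₀)]
        exact pow_le_pow_left₀ (abs_nonneg _) hj₀abs 2
      have hb2 : ∏ j ∈ (Finset.univ.erase i).erase j₀, ρ j ^ 2
          ≤ ((C * t) ^ 2) ^ (k - 2) := by
        have hcard : ((Finset.univ.erase i).erase j₀).card = k - 2 := by
          rw [Finset.card_erase_of_mem hj₀mem, Finset.card_erase_of_mem (Finset.mem_univ i),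
            Finset.card_univ, Fintype.card_fin]
          omega
        calc ∏ j ∈ (Finset.univ.erase i).erase j₀, ρ j ^ 2
            ≤ ∏ _j ∈ (Finset.univ.erase i).erase j₀, (C * t) ^ 2 := by
              apply Finset.prod_le_prod (fun j _ => sq_nonneg _)
              intro j _
              rw [← sq_abs (ρ j)]
              exact pow_le_pow_left₀ (abs_nonneg _) (hupper j) 2
          _ = ((C * t) ^ 2) ^ (k - 2) := by rw [Finset.prod_const, hcard]
      exact mul_le_mul hb1 hb2 (Finset.prod_nonneg fun j _ => sq_nonneg _) (sq_nonneg a)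
    have hsum_le : ∑ i, ∏ j ∈ Finset.univ.erase i, ρ j ^ 2
        ≤ k * (a ^ 2 * ((C * t) ^ 2) ^ (k - 2)) := by
      calc ∑ i, ∏ j ∈ Finset.univ.erase i, ρ j ^ 2
          ≤ ∑ _i : Fin k, a ^ 2 * ((C * t) ^ 2) ^ (k - 2) :=
            Finset.sum_le_sum fun i _ => haterm i
        _ = k * (a ^ 2 * ((C * t) ^ 2) ^ (k - 2)) := by
            rw [Finset.sum_const, Finset.card_univ, Fintype.card_fin, nsmul_eq_mul]
    have hf₂u : c₀ ≤ f₂ u := hp₂min huS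
    have hkey : c₀ * t ^ (2 * (k - 1)) ≤ k * (a ^ 2 * ((C * t) ^ 2) ^ (k - 2)) := by
      calc c₀ * t ^ (2 * (k - 1)) ≤ f₂ u * t ^ (2 * (k - 1)) := by
            apply mul_le_mul_of_nonneg_right hf₂u (by positivity)
        _ = (t * t) ^ (k - 1) * f₂ u := by
            rw [← sq t, ← pow_mul]
            ring
        _ = ∑ i, ∏ j ∈ Finset.univ.erase i, ρ j ^ 2 := hadj_eq.symm
        _ ≤ k * (a ^ 2 * ((C * t) ^ 2) ^ (k - 2)) := hsum_le
    -- rearrange: a^2 ≥ (c₀ / (k C^(2(k-2)))) * t^2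
    have hexp : 2 * (k - 1) = 2 * (k - 2) + 2 := by omega
    have hCt : ((C * t) ^ 2) ^ (k - 2) = C ^ (2 * (k - 2)) * t ^ (2 * (k - 2)) := by
      rw [mul_pow, mul_pow, ← pow_mul, ← pow_mul]
    have htpow : (0 : ℝ) < t ^ (2 * (k - 2)) := by positivity
    have hkey2 : c₀ * t ^ 2 ≤ (k * C ^ (2 * (k - 2))) * a ^ 2 := by
      rw [hexp, pow_add, hCt] at hkey
      have h' : t ^ (2 * (k - 2)) * (c₀ * t ^ 2)
          ≤ t ^ (2 * (k - 2)) * ((k * C ^ (2 * (k - 2))) * a ^ 2) := by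
        calc t ^ (2 * (k - 2)) * (c₀ * t ^ 2) = c₀ * (t ^ (2 * (k - 2)) * t ^ 2) := by ring
          _ ≤ k * (a ^ 2 * (C ^ (2 * (k - 2)) * t ^ (2 * (k - 2)))) := hkey
          _ = t ^ (2 * (k - 2)) * ((k * C ^ (2 * (k - 2))) * a ^ 2) := by ring
      exact le_of_mul_le_mul_left h' htpow
    have ha2 : c ^ 2 * t ^ 2 ≤ a ^ 2 := by
      rw [hcdef, Real.sq_sqrt (le_of_lt (div_pos hc₀pos hden))]
      rw [div_mul_eq_mul_div, div_le_iff₀ hden]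
      calc c₀ * t ^ 2 ≤ (k * C ^ (2 * (k - 2))) * a ^ 2 := hkey2
        _ = a ^ 2 * (k * C ^ (2 * (k - 2))) := by ring
    have h1 : (c * t) ^ 2 ≤ a ^ 2 := by
      calc (c * t) ^ 2 = c ^ 2 * t ^ 2 := by ring
        _ ≤ a ^ 2 := ha2
    have h2 : (0 : ℝ) ≤ c * t := mul_nonneg hcpos.le ht.le
    have hanneg : (0 : ℝ) ≤ a := by rw [hadefn]; exact abs_nonneg _
    calc c * t = Real.sqrt ((c * t) ^ 2) := (Real.sqrt_sq h2).symm
      _ ≤ Real.sqrt (a ^ 2) := Real.sqrt_le_sqrt h1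
      _ = a := Real.sqrt_sq hanneg
  · -- Upper bound
    exact hupper _


end Paper
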